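/- Fix γ > 0. Let F_{10}, F_{20} be distributions on [0,∞) and define F_{iγ} by (F_{iγ})̄(x) = e^{-γx}(F_{i0})̄(x) for x ≥ 0. If μ(F_{20}) := ∫₀^∞ (F_{20})̄(y) dy = ∞, then (F_{1γ})̄(x) = o((F_{1γ}*F_{2γ})̄(x)) as x → ∞. -/

import Mathlib

open MeasureTheory Filter Set Asymptotics
open scoped ENNReal

/-- The tail `F̄(x) = μ((x,∞))` of a distribution `μ` on `ℝ`. -/
noncomputable def tail (μ : MeasureTheory.Measure ℝ) (x : ℝ) : ℝ := (μ (Set.Ioi x)).toReal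

/-- Convolution of two distributions on `ℝ`. -/
noncomputable def mconv (μ ν : MeasureTheory.Measure ℝ) : MeasureTheory.Measure ℝ :=
  MeasureTheory.Measure.map (fun p : ℝ × ℝ => p.1 + p.2) (μ.prod ν)

/-- `iconv μ k` is the `k`-fold convolution `μ^{*k}` (with `μ^{*0} = δ₀`). -/
noncomputable def iconv (μ : MeasureTheory.Measure ℝ) : ℕ → MeasureTheory.Measure ℝ
  | 0 => MeasureTheory.Measure.dirac 0
  | n + 1 => mconv (iconv μ n) μ

/-- The class `L(γ)`: `F̄(x-t) ~ e^{γt} F̄(x)` as `x → ∞`, for every `t`. -/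
def MemL (γ : ℝ) (μ : MeasureTheory.Measure ℝ) : Prop :=
  ∀ t : ℝ, Filter.Tendsto (fun x => tail μ (x - t) / tail μ x) Filter.atTop
    (nhds (Real.exp (γ * t)))

/-- The class `OS`: `limsup_{x→∞} (F*F)̄(x) / F̄(x) < ∞`. -/
def MemOS (μ : MeasureTheory.Measure ℝ) : Prop :=
  Filter.IsBoundedUnder (· ≤ ·) Filter.atTop (fun x => tail (mconv μ μ) x / tail μ x)

lemma tail_nonneg' (μ : Measure ℝ) (x : ℝ) : 0 ≤ tail μ x := ENNReal.toReal_nonneg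

lemma tail_anti' (μ : Measure ℝ) [IsFiniteMeasure μ] : Antitone (tail μ) := fun x y hxy =>
  ENNReal.toReal_mono (measure_ne_top μ _) (measure_mono (Set.Ioi_subset_Ioi hxy))

lemma meas_Ioi' (μ : Measure ℝ) [IsFiniteMeasure μ] (x : ℝ) :
    μ (Set.Ioi x) = ENNReal.ofReal (tail μ x) :=
  (ENNReal.ofReal_toReal (measure_ne_top μ _)).symm

lemma exp_integral' (γ : ℝ) (v : ℝ) :
    ∫ t in (0:ℝ)..v, γ * Real.exp (γ * t) = Real.exp (γ * v) - 1 := by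
  have h : ∀ t ∈ Set.uIcc (0:ℝ) v,
      HasDerivAt (fun t => Real.exp (γ * t)) (γ * Real.exp (γ * t)) t := by
    intro t _
    have := ((hasDerivAt_id t).const_mul γ).exp
    simpa [mul_comm] using this
  have h2 := intervalIntegral.integral_eq_sub_of_hasDerivAt h
    (by apply Continuous.intervalIntegrable; continuity)
  simpa using h2

theorem stmt14 (γ : ℝ) (hγ : 0 < γ) (F10 F20 F1γ F2γ : Measure ℝ)
    [IsProbabilityMeasure F10] [IsProbabilityMeasure F20]
    [IsProbabilityMeasure F1γ] [IsProbabilityMeasure F2γ]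
    (hs1 : F10 (Set.Iio 0) = 0) (hs2 : F20 (Set.Iio 0) = 0)
    (ht1 : ∀ x : ℝ, 0 ≤ x → tail F1γ x = Real.exp (-(γ * x)) * tail F10 x)
    (ht2 : ∀ x : ℝ, 0 ≤ x → tail F2γ x = Real.exp (-(γ * x)) * tail F20 x)
    (hdiv : Filter.Tendsto (fun x : ℝ => ∫ y in Set.Ioc 0 x, tail F20 y)
      Filter.atTop Filter.atTop) :
    (fun x => tail F1γ x) =o[Filter.atTop] fun x => tail (mconv F1γ F2γ) x := by
  classical
  set g : ℝ → ℝ≥0∞ := fun v => ENNReal.ofReal (Real.exp (γ * v)) with hgdef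
  have hgm : Measurable g := by
    apply ENNReal.measurable_ofReal.comp
    exact (Real.continuous_exp.comp (continuous_const.mul continuous_id)).measurable
  set I : ℝ → ℝ≥0∞ := fun x => ∫⁻ v in Set.Ioc 0 x, g v ∂F2γ with hIdef
  -- Step A : lower bound on the convolution tail
  have hmap : ∀ x : ℝ, (mconv F1γ F2γ) (Set.Ioi x)
      = (F1γ.prod F2γ) ((fun p : ℝ × ℝ => p.1 + p.2) ⁻¹' (Set.Ioi x)) := fun x =>
    Measure.map_apply (measurable_fst.add measurable_snd) measurableSet_Ioi
  have key : ∀ x : ℝ, 0 ≤ x →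
      ENNReal.ofReal (tail F1γ x) * I x ≤ (mconv F1γ F2γ) (Set.Ioi x) := by
    intro x hx
    set T : Set (ℝ × ℝ) := {p : ℝ × ℝ | (0 < p.2 ∧ p.2 ≤ x) ∧ x - p.2 < p.1} with hTdef
    have hTm : MeasurableSet T :=
      ((measurableSet_lt measurable_const measurable_snd).inter
        (measurableSet_le measurable_snd measurable_const)).inter
        (measurableSet_lt (measurable_const.sub measurable_snd) measurable_fst)
    have hTsub : T ⊆ (fun p : ℝ × ℝ => p.1 + p.2) ⁻¹' (Set.Ioi x) := by
      rintro ⟨u, v⟩ ⟨⟨hv0, hvx⟩, hu⟩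
      simp only [Set.mem_preimage, Set.mem_Ioi]
      linarith
    have hT : (F1γ.prod F2γ) T
        = ∫⁻ v in Set.Ioc 0 x, F1γ (Set.Ioi (x - v)) ∂F2γ := by
      rw [Measure.prod_apply_symm hTm]
      rw [← lintegral_indicator measurableSet_Ioc]
      apply lintegral_congr
      intro v
      by_cases hv : v ∈ Set.Ioc 0 x
      · rw [Set.indicator_of_mem hv]
        congr 1
        ext u
        simp [hTdef, hv.1, hv.2]
      · rw [Set.indicator_of_notMem hv]
        have : (fun u => (u, v)) ⁻¹' T = ∅ := by
          ext u
          simp only [Set.mem_Ioc, not_and_or, not_lt, not_le] at hv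
          rcases hv with hv | hv <;> simp [hTdef] <;> intro h1 h2 <;> [linarith; linarith]
        rw [this, measure_empty]
    have hpoint : ∀ v ∈ Set.Ioc 0 x,
        g v * ENNReal.ofReal (tail F1γ x) ≤ F1γ (Set.Ioi (x - v)) := by
      intro v hv
      rw [meas_Ioi']
      have hxv : 0 ≤ x - v := by linarith [hv.2]
      have h1 : tail F1γ (x - v) = Real.exp (-(γ * (x - v))) * tail F10 (x - v) := ht1 _ hxv
      have h2 : tail F1γ x = Real.exp (-(γ * x)) * tail F10 x := ht1 _ hx
      have h3 : Real.exp (γ * v) * tail F1γ x ≤ tail F1γ (x - v) := by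
        rw [h1, h2]
        have h4 : tail F10 x ≤ tail F10 (x - v) := tail_anti' F10 (by linarith [hv.1])
        have h5 : Real.exp (γ * v) * Real.exp (-(γ * x)) = Real.exp (-(γ * (x - v))) := by
          rw [← Real.exp_add]; ring_nf
        calc Real.exp (γ * v) * (Real.exp (-(γ * x)) * tail F10 x)
            = Real.exp (-(γ * (x - v))) * tail F10 x := by rw [← h5]; ring
          _ ≤ Real.exp (-(γ * (x - v))) * tail F10 (x - v) :=
              mul_le_mul_of_nonneg_left h4 (Real.exp_nonneg _)
      calc g v * ENNReal.ofReal (tail F1γ x)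
          = ENNReal.ofReal (Real.exp (γ * v) * tail F1γ x) :=
            (ENNReal.ofReal_mul (Real.exp_nonneg _)).symm
        _ ≤ ENNReal.ofReal (tail F1γ (x - v)) := ENNReal.ofReal_le_ofReal h3
    calc ENNReal.ofReal (tail F1γ x) * I x
        = ∫⁻ v in Set.Ioc 0 x, g v * ENNReal.ofReal (tail F1γ x) ∂F2γ := by
          rw [lintegral_mul_const _ hgm, mul_comm]
      _ ≤ ∫⁻ v in Set.Ioc 0 x, F1γ (Set.Ioi (x - v)) ∂F2γ :=
          setLIntegral_mono' measurableSet_Ioc hpoint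
      _ = (F1γ.prod F2γ) T := hT.symm
      _ ≤ (F1γ.prod F2γ) ((fun p : ℝ × ℝ => p.1 + p.2) ⁻¹' (Set.Ioi x)) :=
          measure_mono hTsub
      _ = (mconv F1γ F2γ) (Set.Ioi x) := (hmap x).symm
  -- Step B : K = ∞
  have htail20m : Measurable (tail F20) := (tail_anti' F20).measurable
  have hK : ∫⁻ t in Set.Ioi 0, ENNReal.ofReal (tail F20 t) = ∞ := by
    by_contra hKne
    have hb : ∀ x : ℝ, (∫ y in Set.Ioc 0 x, tail F20 y)
        ≤ (∫⁻ t in Set.Ioi 0, ENNReal.ofReal (tail F20 t)).toReal := by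
      intro x
      rw [integral_eq_lintegral_of_nonneg_ae (ae_of_all _ fun y => tail_nonneg' F20 y)
        htail20m.aestronglyMeasurable]
      exact ENNReal.toReal_mono hKne (lintegral_mono_set Set.Ioc_subset_Ioi_self)
    obtain ⟨x, hx⟩ := (hdiv.eventually
      (eventually_ge_atTop ((∫⁻ t in Set.Ioi 0, ENNReal.ofReal (tail F20 t)).toReal + 1))).exists
    linarith [hb x]
  -- Step C : J = ∞ via layer cake
  have hJ : ∫⁻ v in Set.Ioi 0, g v ∂F2γ = ∞ := by
    have f_nn : 0 ≤ᵐ[F2γ.restrict (Set.Ioi 0)] (id : ℝ → ℝ) :=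
      (ae_restrict_iff' measurableSet_Ioi).mpr (ae_of_all _ fun v hv => le_of_lt hv)
    have g_intble : ∀ t > (0:ℝ),
        IntervalIntegrable (fun t => γ * Real.exp (γ * t)) volume 0 t := fun t _ => by
      apply Continuous.intervalIntegrable; continuity
    have g_nn : ∀ᵐ t ∂(volume.restrict (Set.Ioi 0)), 0 ≤ γ * Real.exp (γ * t) :=
      ae_of_all _ fun t => by positivity
    have layer := lintegral_comp_eq_lintegral_meas_le_mul (F2γ.restrict (Set.Ioi 0))
      f_nn aemeasurable_id g_intble g_nn
    simp only [id] at layer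
    have hLHS : ∫⁻ v in Set.Ioi 0, ENNReal.ofReal (∫ t in (0:ℝ)..v, γ * Real.exp (γ * t)) ∂F2γ
        ≤ ∫⁻ v in Set.Ioi 0, g v ∂F2γ := by
      apply lintegral_mono
      intro v
      dsimp only
      rw [exp_integral']
      exact ENNReal.ofReal_le_ofReal (by linarith [Real.exp_pos (γ * v)])
    have hRHS : ∫⁻ t in Set.Ioi 0, ENNReal.ofReal γ * ENNReal.ofReal (tail F20 t)
        ≤ ∫⁻ t in Set.Ioi 0,
          (F2γ.restrict (Set.Ioi 0)) {a : ℝ | t ≤ a} * ENNReal.ofReal (γ * Real.exp (γ * t)) := by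
      apply setLIntegral_mono' measurableSet_Ioi
      intro t ht
      have h0 : {a : ℝ | t ≤ a} = Set.Ici t := rfl
      have h1 : (F2γ.restrict (Set.Ioi 0)) {a : ℝ | t ≤ a} = F2γ (Set.Ici t) := by
        rw [h0, Measure.restrict_apply measurableSet_Ici]
        congr 1
        exact Set.inter_eq_left.mpr (fun a ha => Set.mem_Ioi.mpr (lt_of_lt_of_le (Set.mem_Ioi.mp ht) (Set.mem_Ici.mp ha)))
      rw [h1]
      have h2 : ENNReal.ofReal (Real.exp (-(γ * t)) * tail F20 t)
          * ENNReal.ofReal (γ * Real.exp (γ * t))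
          = ENNReal.ofReal γ * ENNReal.ofReal (tail F20 t) := by
        rw [← ENNReal.ofReal_mul (mul_nonneg (Real.exp_nonneg _) (tail_nonneg' F20 t)), ← ENNReal.ofReal_mul hγ.le]
        congr 1
        have : Real.exp (-(γ * t)) * Real.exp (γ * t) = 1 := by
          rw [← Real.exp_add]; simp
        linear_combination (γ * tail F20 t) * this
      calc ENNReal.ofReal γ * ENNReal.ofReal (tail F20 t)
          = ENNReal.ofReal (Real.exp (-(γ * t)) * tail F20 t)
            * ENNReal.ofReal (γ * Real.exp (γ * t)) := h2.symm
        _ = F2γ (Set.Ioi t) * ENNReal.ofReal (γ * Real.exp (γ * t)) := by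
            rw [meas_Ioi', ht2 t ht.le]
        _ ≤ F2γ (Set.Ici t) * ENNReal.ofReal (γ * Real.exp (γ * t)) :=
            mul_le_mul_left (measure_mono Set.Ioi_subset_Ici_self) _
    have hmid : ∫⁻ t in Set.Ioi 0, ENNReal.ofReal γ * ENNReal.ofReal (tail F20 t) = ∞ := by
      rw [lintegral_const_mul _ htail20m.ennreal_ofReal, hK,
        ENNReal.mul_top (by simpa using (ENNReal.ofReal_pos.mpr hγ).ne')]
    have : (∞ : ℝ≥0∞) ≤ ∫⁻ v in Set.Ioi 0, g v ∂F2γ := by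
      calc (∞ : ℝ≥0∞) = ∫⁻ t in Set.Ioi 0, ENNReal.ofReal γ * ENNReal.ofReal (tail F20 t) :=
            hmid.symm
        _ ≤ _ := hRHS
        _ = _ := layer.symm
        _ ≤ _ := hLHS
    exact top_le_iff.mp this
  -- Step D : I x is eventually large
  have hIm : Monotone I := fun a b hab =>
    lintegral_mono_set (Set.Ioc_subset_Ioc_right hab)
  have hsup : (⨆ n : ℕ, I n) = ∞ := by
    have h1 : ∀ n : ℕ, (∫⁻ v, (Set.Ioc (0:ℝ) (n:ℝ)).indicator g v ∂F2γ) = I n := fun n =>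
      lintegral_indicator measurableSet_Ioc _
    have h2 : ∀ v, (⨆ n : ℕ, (Set.Ioc (0:ℝ) (n:ℝ)).indicator g v)
        = (Set.Ioi (0:ℝ)).indicator g v := by
      intro v
      by_cases hv : 0 < v
      · rw [Set.indicator_of_mem (show v ∈ Set.Ioi (0:ℝ) from hv)]
        apply le_antisymm
        · exact iSup_le fun n => Set.indicator_le_self _ _ v
        · obtain ⟨n, hn⟩ := exists_nat_ge v
          exact le_iSup_of_le n (le_of_eq (Set.indicator_of_mem (Set.mem_Ioc.mpr ⟨hv, hn⟩) g).symm)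
      · push_neg at hv
        rw [Set.indicator_of_notMem (by simpa using hv)]
        simp only [ENNReal.iSup_eq_zero]
        intro n
        exact Set.indicator_of_notMem (fun h => absurd h.1 (not_lt.mpr hv)) _
    have h3 := lintegral_iSup (μ := F2γ)
      (f := fun n (v : ℝ) => (Set.Ioc (0:ℝ) (n:ℝ)).indicator g v)
      (fun n => hgm.indicator measurableSet_Ioc)
      (fun m n hmn v => by
        apply Set.indicator_le_indicator_of_subset (Set.Ioc_subset_Ioc_right (by exact_mod_cast hmn))
        intro a; exact zero_le)
    calc (⨆ n : ℕ, I n) = ⨆ n : ℕ, ∫⁻ v, (Set.Ioc (0:ℝ) (n:ℝ)).indicator g v ∂F2γ := by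
          simp_rw [h1]
      _ = ∫⁻ v, ⨆ n : ℕ, (Set.Ioc (0:ℝ) (n:ℝ)).indicator g v ∂F2γ := h3.symm
      _ = ∫⁻ v, (Set.Ioi (0:ℝ)).indicator g v ∂F2γ := lintegral_congr h2
      _ = ∫⁻ v in Set.Ioi 0, g v ∂F2γ := lintegral_indicator measurableSet_Ioi _
      _ = ∞ := hJ
  -- conclusion
  rw [Asymptotics.isLittleO_iff]
  intro c hc
  have : (ENNReal.ofReal c⁻¹ : ℝ≥0∞) < ⨆ n : ℕ, I n := by rw [hsup]; exact ENNReal.ofReal_lt_top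
  obtain ⟨n, hn⟩ := lt_iSup_iff.mp this
  filter_upwards [eventually_ge_atTop (max (n : ℝ) 0)] with x hx
  have hx0 : (0:ℝ) ≤ x := le_trans (le_max_right _ _) hx
  have hxn : (n : ℝ) ≤ x := le_trans (le_max_left _ _) hx
  have hIx : ENNReal.ofReal c⁻¹ ≤ I x := le_trans hn.le (hIm hxn)
  have hIfin : I x ≠ ∞ := by
    have : I x ≤ ENNReal.ofReal (Real.exp (γ * x)) * F2γ (Set.Ioc 0 x) := by
      rw [← setLIntegral_const]
      apply setLIntegral_mono' measurableSet_Ioc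
      intro v hv
      exact ENNReal.ofReal_le_ofReal (Real.exp_le_exp.mpr
        (mul_le_mul_of_nonneg_left hv.2 hγ.le))
    exact ne_top_of_le_ne_top (ENNReal.mul_ne_top ENNReal.ofReal_ne_top (measure_ne_top _ _)) this
  have hIr : c⁻¹ ≤ (I x).toReal := by
    have := ENNReal.toReal_mono hIfin hIx
    rwa [ENNReal.toReal_ofReal (by positivity)] at this
  have hconv_ne : (mconv F1γ F2γ) (Set.Ioi x) ≠ ∞ := by
    rw [hmap x]; exact measure_ne_top _ _
  have hmain : tail F1γ x * (I x).toReal ≤ tail (mconv F1γ F2γ) x := by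
    have := ENNReal.toReal_mono hconv_ne (key x hx0)
    rwa [ENNReal.toReal_mul, ENNReal.toReal_ofReal (tail_nonneg' F1γ x)] at this
  have ht1nn := tail_nonneg' F1γ x
  have htcnn := tail_nonneg' (mconv F1γ F2γ) x
  rw [Real.norm_eq_abs, Real.norm_eq_abs, abs_of_nonneg ht1nn, abs_of_nonneg htcnn]
  have h6 : c⁻¹ * tail F1γ x ≤ tail (mconv F1γ F2γ) x := by
    nlinarith [hmain, mul_le_mul_of_nonneg_right hIr ht1nn]
  have h7 := mul_le_mul_of_nonneg_left h6 hc.le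
  rwa [← mul_assoc, mul_inv_cancel₀ hc.ne', one_mul] at h7
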